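/- Let ξ ∈ [0,1] and γ ∈ [0, π/2]. Then the infimum over all η₀ ∈ [0, π/2 − γ] of ξ·sin²η₀ + (1 − ξ)·sin²(π/2 − γ − η₀) is attained and equals (1/2)·(1 − √(1 − 4ξ(1 − ξ)·cos²γ)). -/

import Mathlib

open Real

private lemma amp_lb (a b C S r : ℝ) (h1 : C ^ 2 + S ^ 2 = 1) (hr : 0 ≤ r)
    (hr2 : r ^ 2 = a ^ 2 + b ^ 2) : -r ≤ a * C + b * S := by
  have hsq : (a * C + b * S) ^ 2 ≤ r ^ 2 := by nlinarith [sq_nonneg (a * S - b * C)]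
  nlinarith [sq_nonneg (a * C + b * S + r)]

set_option maxHeartbeats 1600000 in
private lemma f_expand (ξ γ η : ℝ) :
    ξ * Real.sin η ^ 2 + (1 - ξ) * Real.sin (π / 2 - γ - η) ^ 2 =
      (1 + ((1 - ξ) * (2 * Real.cos γ ^ 2 - 1) - ξ) * Real.cos (2 * η)
        + (-(2 * (1 - ξ) * Real.cos γ * Real.sin γ)) * Real.sin (2 * η)) / 2 := by
  have h1 := Real.sin_sq_add_cos_sq η
  have h2 := Real.sin_sq_add_cos_sq γ
  rw [show π / 2 - γ - η = π / 2 - (γ + η) by ring, Real.sin_pi_div_two_sub, Real.cos_add,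
    Real.cos_two_mul', Real.sin_two_mul]
  linear_combination ((1 - ξ) * Real.sin η ^ 2) * h2 + (1 / 2) * h1

set_option maxHeartbeats 1600000 in
/-- The infimum over all admissible angles `η₀` of the probability of error is attained
and equals the Helstrom probability of error. -/
theorem helstrom_is_least (ξ γ : ℝ)
    (hξ : ξ ∈ Set.Icc (0 : ℝ) 1) (hγ : γ ∈ Set.Icc (0 : ℝ) (π / 2)) :
    IsLeast
      ((fun η₀ => ξ * Real.sin η₀ ^ 2 + (1 - ξ) * Real.sin (π / 2 - γ - η₀) ^ 2) ''
        Set.Icc 0 (π / 2 - γ))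
      ((1 / 2) * (1 - Real.sqrt (1 - 4 * ξ * (1 - ξ) * Real.cos γ ^ 2))) := by
  obtain ⟨hξ0, hξ1⟩ := hξ
  obtain ⟨hγ0, hγπ⟩ := hγ
  have h1ξ : (0:ℝ) ≤ 1 - ξ := by linarith
  set u := Real.cos γ with hu
  set s := Real.sin γ with hs
  have hus : s ^ 2 + u ^ 2 = 1 := Real.sin_sq_add_cos_sq γ
  have hu0 : 0 ≤ u := Real.cos_nonneg_of_mem_Icc ⟨by linarith [Real.pi_pos], hγπ⟩
  have hs0 : 0 ≤ s := Real.sin_nonneg_of_nonneg_of_le_pi hγ0 (by linarith [Real.pi_pos])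
  have hin : (0:ℝ) ≤ 1 - 4 * ξ * (1 - ξ) * u ^ 2 := by
    nlinarith [sq_nonneg (1 - 2 * ξ), sq_nonneg u, sq_nonneg s,
      mul_nonneg (mul_nonneg hξ0 h1ξ) (sq_nonneg s)]
  set r := Real.sqrt (1 - 4 * ξ * (1 - ξ) * u ^ 2) with hr
  have hr0 : 0 ≤ r := Real.sqrt_nonneg _
  have hr2 : r ^ 2 = 1 - 4 * ξ * (1 - ξ) * u ^ 2 := Real.sq_sqrt hin
  clear_value u s r
  obtain ⟨A, hA⟩ : ∃ A, A = (1 - ξ) * (2 * u ^ 2 - 1) - ξ := ⟨_, rfl⟩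
  obtain ⟨B, hB⟩ : ∃ B, B = -(2 * (1 - ξ) * u * s) := ⟨_, rfl⟩
  have hB0 : B ≤ 0 := by
    have : 0 ≤ 2 * (1 - ξ) * u * s :=
      mul_nonneg (mul_nonneg (by linarith) hu0) hs0
    rw [hB]; linarith
  have hab : A ^ 2 + B ^ 2 = r ^ 2 := by
    rw [hA, hB, hr2]; linear_combination (4 * (1 - ξ) ^ 2 * u ^ 2) * hus
  have hr1 : r ≤ 1 := by
    nlinarith [mul_nonneg (mul_nonneg hξ0 h1ξ) (sq_nonneg u)]
  constructor
  · -- attainment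
    rcases eq_or_lt_of_le hr0 with hre | hrpos
    · -- r = 0 : forces ξ = 1/2, cos γ = 1, function value at 0 is 1/2
      refine ⟨0, ⟨le_refl 0, by linarith⟩, ?_⟩
      have hzero : 1 - 4 * ξ * (1 - ξ) * u ^ 2 = 0 := by
        rw [← hr2, ← hre]; ring
      have hu2 : u ^ 2 = 1 := by
        nlinarith [sq_nonneg (1 - 2 * ξ), sq_nonneg u, sq_nonneg s,
          mul_nonneg (mul_nonneg hξ0 h1ξ) (sq_nonneg s)]
      have hxi : ξ = 1 / 2 := by nlinarith [sq_nonneg (1 - 2 * ξ)]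
      show ξ * Real.sin (0:ℝ) ^ 2 + (1 - ξ) * Real.sin (π / 2 - γ - 0) ^ 2 = 1 / 2 * (1 - r)
      rw [show π / 2 - γ - 0 = π / 2 - γ by ring, Real.sin_pi_div_two_sub, Real.sin_zero, ← hu,
        ← hre, hxi]
      nlinarith [hu2]
    · -- r > 0
      have habs : A ^ 2 ≤ r ^ 2 := by nlinarith [sq_nonneg B]
      have h1 : -1 ≤ -A / r := by rw [le_div_iff₀ hrpos]; nlinarith
      have h2 : -A / r ≤ 1 := by rw [div_le_iff₀ hrpos]; nlinarith
      have hcos : Real.cos (2 * (Real.arccos (-A / r) / 2)) = -A / r := by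
        rw [show 2 * (Real.arccos (-A / r) / 2) = Real.arccos (-A / r) by ring,
          Real.cos_arccos h1 h2]
      have hsin : Real.sin (2 * (Real.arccos (-A / r) / 2)) = -B / r := by
        rw [show 2 * (Real.arccos (-A / r) / 2) = Real.arccos (-A / r) by ring,
          Real.sin_arccos]
        have hBr : 1 - (-A / r) ^ 2 = (-B / r) ^ 2 := by
          field_simp
          linear_combination -hab
        rw [hBr, Real.sqrt_sq (div_nonneg (by linarith) hrpos.le)]
      -- key range fact : A ≤ r * (2u²-1)
      have hkey : A ≤ r * (2 * u ^ 2 - 1) := by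
        rcases le_or_gt 0 (2 * u ^ 2 - 1) with hc | hc
        · have hrξ : 1 - 2 * ξ ≤ r := by
            rcases le_or_gt (1 - 2 * ξ) 0 with h | h
            · linarith
            · rw [hr, Real.le_sqrt h.le hin]
              nlinarith [mul_nonneg (mul_nonneg hξ0 h1ξ) (sq_nonneg s)]
          rw [hA]; nlinarith
        · rw [hA]; nlinarith
      refine ⟨Real.arccos (-A / r) / 2, ⟨div_nonneg (Real.arccos_nonneg _) (by norm_num), ?_⟩, ?_⟩
      · -- arccos (-A/r) ≤ π - 2γ
        have hcγ : Real.cos (π - 2 * γ) = -(2 * u ^ 2 - 1) := by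
          rw [Real.cos_pi_sub, Real.cos_two_mul, ← hu]
        have hle : Real.cos (π - 2 * γ) ≤ -A / r := by
          rw [hcγ, le_div_iff₀ hrpos]; nlinarith
        by_contra hlt
        push_neg at hlt
        have h2γ : π - 2 * γ < Real.arccos (-A / r) := by linarith
        have := Real.strictAntiOn_cos ⟨by linarith, by linarith⟩
          ⟨Real.arccos_nonneg _, Real.arccos_le_pi _⟩ h2γ
        rw [Real.cos_arccos h1 h2] at this
        linarith
      · show ξ * Real.sin (Real.arccos (-A / r) / 2) ^ 2 +
            (1 - ξ) * Real.sin (π / 2 - γ - Real.arccos (-A / r) / 2) ^ 2 = 1 / 2 * (1 - r)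
        rw [f_expand, hcos, hsin, ← hu, ← hs, ← hA, ← hB]
        field_simp
        linear_combination -hab
  · -- lower bound
    rintro y ⟨η, -, rfl⟩
    show 1 / 2 * (1 - r) ≤ ξ * Real.sin η ^ 2 + (1 - ξ) * Real.sin (π / 2 - γ - η) ^ 2
    rw [f_expand, ← hu, ← hs, ← hA, ← hB]
    have := amp_lb A B (Real.cos (2 * η)) (Real.sin (2 * η)) r
      (by rw [add_comm]; exact Real.sin_sq_add_cos_sq (2 * η)) hr0 hab.symm
    linarith
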